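/- Let H = ⟨a_1, ..., a_n⟩ (n ≥ 3) with α ∈ PF(H) satisfying (n-1)α ∉ H. Then after a suitable permutation of the generators, there exist positive integers ℓ_1, ..., ℓ_n such that α + a_i = ℓ_{i+1} a_{i+1} for 1 ≤ i ≤ n-1 and α + a_n = ℓ_1 a_1; i.e., the RF-matrix associated to α can be taken to be cyclic with exactly one positive off-diagonal entry per row, located in the next column. -/

import Mathlib

/-- The numerical semigroup (as a subset of ℤ) generated by `a`. -/
def SgGen {n : ℕ} (a : Fin n → ℕ) : Set ℤ :=
  {x | ∃ c : Fin n → ℕ, x = ∑ i, (c i : ℤ) * a i}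

/-- `α` is a pseudo-Frobenius number of `⟨a⟩`. -/
def IsPF {n : ℕ} (a : Fin n → ℕ) (α : ℤ) : Prop :=
  α ∉ SgGen a ∧ ∀ i, α + a i ∈ SgGen a

/-- `a` minimally generates: no generator is a combination of the others. -/
def MinGen {n : ℕ} (a : Fin n → ℕ) : Prop :=
  ∀ i, ¬ ∃ c : Fin n → ℕ, c i = 0 ∧ (a i : ℤ) = ∑ j, (c j : ℤ) * a j

lemma sg_zero {n : ℕ} (a : Fin n → ℕ) : (0:ℤ) ∈ SgGen a := ⟨0, by simp⟩

lemma sg_add {n : ℕ} {a : Fin n → ℕ} {x y : ℤ} (hx : x ∈ SgGen a) (hy : y ∈ SgGen a) :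
    x + y ∈ SgGen a := by
  obtain ⟨c, hc⟩ := hx; obtain ⟨d, hd⟩ := hy
  exact ⟨c + d, by simp [hc, hd, add_mul, Finset.sum_add_distrib]⟩

lemma sg_nonneg {n : ℕ} {a : Fin n → ℕ} {x : ℤ} (hx : x ∈ SgGen a) : 0 ≤ x := by
  obtain ⟨c, hc⟩ := hx
  exact hc ▸ Finset.sum_nonneg fun i _ => by positivity

lemma sg_sub_single {n : ℕ} {a : Fin n → ℕ} (c : Fin n → ℕ) (i : Fin n) (hci : 0 < c i) :
    (∑ j, (c j : ℤ) * a j) - a i ∈ SgGen a := by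
  refine ⟨Function.update c i (c i - 1), ?_⟩
  rw [← Finset.add_sum_erase Finset.univ
        (fun j => ((Function.update c i (c i - 1) j : ℕ) : ℤ) * a j) (Finset.mem_univ i),
      ← Finset.add_sum_erase Finset.univ (fun j => ((c j : ℕ) : ℤ) * a j) (Finset.mem_univ i)]
  have h2 : ∀ j ∈ Finset.univ.erase i,
      ((Function.update c i (c i - 1) j : ℕ) : ℤ) * a j = ((c j : ℕ) : ℤ) * a j := by
    intro j hj
    rw [Function.update_of_ne (Finset.ne_of_mem_erase hj)]
  rw [Finset.sum_congr rfl h2, Function.update_self]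
  have h3 : ((c i - 1 : ℕ) : ℤ) = (c i : ℤ) - 1 := by omega
  rw [h3]; ring

theorem stmt18 {n : ℕ} [NeZero n] (hn : 3 ≤ n) (a : Fin n → ℕ) (ha : ∀ i, 0 < a i)
    (hgcd : Finset.univ.gcd a = 1) (hmin : MinGen a)
    (α : ℤ) (hα : IsPF a α) (hout : ((n : ℤ) - 1) * α ∉ SgGen a) :
    ∃ σ : Equiv.Perm (Fin n), ∃ ℓ : Fin n → ℕ, (∀ i, 0 < ℓ i) ∧
      ∀ i : Fin n, α + a (σ i) = (ℓ (i + 1) : ℤ) * a (σ (i + 1)) := by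
  obtain ⟨m, rfl⟩ : ∃ m, n = m + 3 := ⟨n - 3, by omega⟩
  choose c hc using hα.2
  have hdiag : ∀ i, c i i = 0 := by
    intro i
    by_contra h
    apply hα.1
    have h1 := sg_sub_single (a := a) (c i) i (Nat.pos_of_ne_zero h)
    rw [← hc i] at h1
    simpa using h1
  have hstep : ∀ u v, 0 < c u v → α + a u - a v ∈ SgGen a := by
    intro u v hv
    have h1 := sg_sub_single (a := a) (c u) v hv
    rwa [← hc u] at h1
  have hne : ∀ i, ∃ j, 0 < c i j := by
    intro i
    by_contra h
    push_neg at h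
    have hzero : α + a i = 0 := by
      rw [hc i]
      exact Finset.sum_eq_zero fun j _ => by simp [Nat.le_zero.mp (h j)]
    have hαeq : α = -(a i : ℤ) := by linarith
    obtain ⟨j, hj⟩ := exists_ne i
    apply hmin j
    refine ⟨fun k => c j k + (if k = i then 1 else 0), by simp [hdiag j, hj], ?_⟩
    have h2 := hc j
    rw [hαeq] at h2
    push_cast
    have h3 : ∀ k : Fin (m+3), ((c j k : ℤ) + if k = i then (1:ℤ) else 0) * a k
        = (c j k : ℤ) * a k + (if k = i then (a k : ℤ) else 0) := by
      intro k; split <;> ring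
    rw [Finset.sum_congr rfl fun k _ => h3 k, Finset.sum_add_distrib,
      Finset.sum_ite_eq' Finset.univ i (fun k => (a k : ℤ))]
    simp only [Finset.mem_univ, if_true]
    linarith
  have hPF : ∀ h', h' ∈ SgGen a → 0 < h' → α + h' ∈ SgGen a := by
    intro h' hmem hpos
    obtain ⟨d, hd⟩ := hmem
    have hdne : ∃ i, 0 < d i := by
      by_contra hno; push_neg at hno
      have : h' = 0 := by
        rw [hd]; exact Finset.sum_eq_zero fun j _ => by simp [Nat.le_zero.mp (hno j)]
      omega
    obtain ⟨i, hi⟩ := hdne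
    have h1 : h' - a i ∈ SgGen a := hd ▸ sg_sub_single d i hi
    have h2 := sg_add (hα.2 i) h1
    convert h2 using 1; ring
  have hwalk : ∀ (k : ℕ) (w : ℕ → Fin (m+3)), (∀ t < k, 0 < c (w t) (w (t+1))) →
      w k = w 0 → (k : ℤ) * α ∈ SgGen a := by
    intro k w hw hcl
    have key : ∑ t ∈ Finset.range k, (α + (a (w t) : ℤ) - a (w (t+1))) = (k : ℤ) * α := by
      have h1 : ∀ t, α + (a (w t) : ℤ) - a (w (t+1))
          = α + ((a (w t) : ℤ) - a (w (t+1))) := fun t => by ring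
      simp only [h1]
      rw [Finset.sum_add_distrib, Finset.sum_const, Finset.card_range,
        Finset.sum_range_sub' (f := fun t => (a (w t) : ℤ)), hcl]
      simp [nsmul_eq_mul]
    rw [← key]
    exact Finset.sum_induction _ (· ∈ SgGen a) (fun _ _ => sg_add) (sg_zero a)
      (fun t ht => hstep _ _ (hw t (Finset.mem_range.mp ht)))
  have hα0 : α ≠ 0 := fun h => hα.1 (h ▸ sg_zero a)
  have hmult : ∀ k : ℕ, 0 < k → k ≤ m + 2 → (k : ℤ) * α ∉ SgGen a := by
    intro k hk hk2 hmem
    rcases eq_or_lt_of_le (show 1 ≤ k from hk) with h1 | h1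
    · exact hα.1 (by simpa [← h1] using hmem)
    have hαpos : 0 < α := by
      rcases lt_trichotomy α 0 with h | h | h
      · have hneg : (k:ℤ) * α < 0 :=
          mul_neg_of_pos_of_neg (by exact_mod_cast hk) h
        linarith [sg_nonneg hmem]
      · exact absurd h hα0
      · exact h
    have up : ∀ d : ℕ, ((k + d : ℕ) : ℤ) * α ∈ SgGen a := by
      intro d
      induction d with
      | zero => simpa using hmem
      | succ d ih =>
        have hpos : 0 < ((k + d : ℕ) : ℤ) * α := by
          apply mul_pos _ hαpos
          exact_mod_cast Nat.pos_of_ne_zero (by omega)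
        have h2 := hPF _ ih hpos
        convert h2 using 1
        push_cast; ring
    have h3 := up (m + 2 - k)
    have h4 : ((k + (m + 2 - k) : ℕ) : ℤ) = ((m + 3 : ℕ) : ℤ) - 1 := by
      have : k + (m + 2 - k) = m + 2 := by omega
      rw [this]; push_cast; ring
    rw [h4] at h3
    exact hout h3
  choose g hg using hne
  set w : ℕ → Fin (m+3) := fun t => g^[t] 0 with hwdef
  have hwsucc : ∀ t, w (t+1) = g (w t) := fun t => Function.iterate_succ_apply' g t 0
  have hiter : ∀ p q, p < q → q - p ≤ m + 2 → w p ≠ w q := by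
    intro p q hpq hle heq
    apply hmult (q - p) (by omega) hle
    apply hwalk (q - p) (fun t => w (p + t))
    · intro t _
      show 0 < c (w (p + t)) (w (p + (t+1)))
      rw [show p + (t+1) = (p+t)+1 from by omega, hwsucc (p + t)]
      exact hg (w (p+t))
    · show w (p + (q - p)) = w (p + 0)
      rw [show p + (q - p) = q from by omega]
      exact heq.symm
  have hcyc : w (m+3) = w 0 := by
    have aux : ∀ p q : Fin (m+4), p.val < q.val → w p.val = w q.val → w (m+3) = w 0 := by
      intro p q hpq heq
      have h1 : ¬ (q.val - p.val ≤ m + 2) := fun hle => hiter p.val q.val hpq hle heq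
      have hq := q.isLt
      obtain ⟨hp0, hq0⟩ : p.val = 0 ∧ q.val = m + 3 := by omega
      rw [hp0, hq0] at heq
      exact heq.symm
    obtain ⟨s, t, hst, hfeq⟩ := Fintype.exists_ne_map_eq_of_card_lt
      (fun x : Fin (m+4) => w x.val) (by simp only [Fintype.card_fin]; omega)
    rcases lt_trichotomy s.val t.val with h | h | h
    · exact aux s t h hfeq
    · exact absurd (Fin.ext h) hst
    · exact aux t s h hfeq.symm
  have hinj : Function.Injective (fun i : Fin (m+3) => w i.val) := by
    intro i j hij
    have hij' : w i.val = w j.val := hij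
    have hi := i.isLt; have hj := j.isLt
    rcases lt_trichotomy i.val j.val with h | h | h
    · exact absurd hij' (hiter i.val j.val h (by omega))
    · exact Fin.ext h
    · exact absurd hij'.symm (hiter j.val i.val h (by omega))
  let σ : Equiv.Perm (Fin (m+3)) :=
    Equiv.ofBijective _ (Finite.injective_iff_bijective.mp hinj)
  have hσapp : ∀ i : Fin (m+3), σ i = w i.val := fun i => rfl
  have hσ : ∀ i : Fin (m+3), σ (i + 1) = g (σ i) := by
    intro i
    rw [hσapp, hσapp, ← hwsucc i.val]
    have hv : ((i + 1 : Fin (m+3))).val = (i.val + 1) % (m+3) := by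
      rw [Fin.val_add, Fin.val_one]
    rcases Nat.lt_or_ge (i.val + 1) (m+3) with h | h
    · rw [hv, Nat.mod_eq_of_lt h]
    · have hi : i.val = m + 2 := by have := i.isLt; omega
      rw [hv, hi]
      norm_num
      exact hcyc.symm
  have hsupp : ∀ (i j : Fin (m+3)), 0 < c (σ i) j → j = σ (i + 1) := by
    open Fin.CommRing in
    intro i j hj
    by_contra hne'
    set s := σ.symm j with hs
    have hjs : j = σ s := (σ.apply_symm_apply j).symm
    have hs1 : s ≠ i + 1 := fun h => hne' (by rw [hjs, h])
    set k := ((i - s : Fin (m+3))).val + 1 with hk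
    have hkle : k ≤ m + 2 := by
      have h1 := (i - s).isLt
      have h2 : (i - s).val ≠ m + 2 := by
        intro h
        apply hs1
        have h3 : i - s = -1 := Fin.ext (by rw [h, Fin.coe_neg_one])
        have h4 := sub_eq_iff_eq_add.mp h3
        rw [h4]; ring
      omega
    apply hmult k (by omega) hkle
    apply hwalk k (fun t => if t = 0 then σ i else σ (s + ((t - 1 : ℕ) : Fin (m+3))))
    · intro t ht
      rcases Nat.eq_zero_or_pos t with rfl | hpos
      · show 0 < c (if 0 = 0 then σ i else _) (if 1 = 0 then σ i else σ (s + ((1 - 1 : ℕ) : Fin (m+3))))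
        norm_num
        rw [← hjs]
        exact hj
      · obtain ⟨t, rfl⟩ : ∃ t', t = t' + 1 := ⟨t - 1, by omega⟩
        show 0 < c (if t + 1 = 0 then σ i else σ (s + ((t + 1 - 1 : ℕ) : Fin (m+3))))
            (if t + 1 + 1 = 0 then σ i else σ (s + ((t + 1 + 1 - 1 : ℕ) : Fin (m+3))))
        rw [if_neg (by omega), if_neg (by omega),
          show (t + 1 - 1 : ℕ) = t from by omega, show (t + 1 + 1 - 1 : ℕ) = t + 1 from by omega]
        push_cast
        rw [show s + ((t : Fin (m+3)) + 1) = (s + t) + 1 from by ring, hσ (s + t)]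
        exact hg (σ (s + (t : Fin (m+3))))
    · show (if k = 0 then σ i else σ (s + ((k - 1 : ℕ) : Fin (m+3)))) = (if 0 = 0 then σ i else _)
      rw [if_neg (by omega), if_pos rfl, hk,
        show ((i - s).val + 1 - 1 : ℕ) = (i - s).val from by omega,
        Fin.cast_val_eq_self (i - s)]
      congr 1
      ring
  refine ⟨σ, fun j => c (σ (j - 1)) (σ j), ?_, ?_⟩
  · intro j
    have h1 : σ j = g (σ (j - 1)) := by
      have h2 := hσ (j - 1); rwa [sub_add_cancel] at h2
    show 0 < c (σ (j - 1)) (σ j)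
    rw [h1]; exact hg _
  · intro i
    have hrow : α + a (σ i) = (c (σ i) (σ (i+1)) : ℤ) * a (σ (i+1)) := by
      rw [hc (σ i), Finset.sum_eq_single (σ (i+1))]
      · intro j _ hne'
        have h0 : c (σ i) j = 0 := by
          by_contra h
          exact hne' (hsupp i j (Nat.pos_of_ne_zero h))
        simp [h0]
      · intro h; exact absurd (Finset.mem_univ _) h
    rw [hrow]
    show _ = (c (σ ((i + 1) - 1)) (σ (i + 1)) : ℤ) * a (σ (i + 1))
    rw [add_sub_cancel_right]
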